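/- Let w_1 ≥ w_2 ≥ w_3 ≥ w_4 be real numbers with w_1 > w_4, and define s = (2w_2 - w_1 - w_4)/(w_1 - w_4) and t = (2w_3 - w_1 - w_4)/(w_1 - w_4). Then the polynomial p(x) = (x - w_1)(x - w_2)(x - w_3)(x - w_4) has a hyperbolic antiderivative if and only if s·t ≥ -1/5. -/

import Mathlib

open Polynomial

/-- A real polynomial is hyperbolic if all of its complex roots are real. -/
def Hyperbolic (p : Polynomial ℝ) : Prop :=
  ∀ z ∈ (p.map (algebraMap ℝ ℂ)).roots, z.im = 0

open Set


-- IVT helpers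
lemma ivt_oo (P : Polynomial ℝ) {u v : ℝ} (huv : u < v) (hu : P.eval u < 0)
    (hv : 0 < P.eval v) : ∃ r ∈ Set.Ioo u v, P.eval r = 0 := by
  have h := intermediate_value_Ioo (le_of_lt huv) (P.continuousOn (s := Set.Icc u v))
  have : (0:ℝ) ∈ Set.Ioo (P.eval u) (P.eval v) := ⟨hu, hv⟩
  obtain ⟨r, hr, hr0⟩ := h this
  exact ⟨r, hr, hr0⟩

lemma ivt_oc (P : Polynomial ℝ) {u v : ℝ} (huv : u < v) (hu : P.eval u < 0)
    (hv : 0 ≤ P.eval v) : ∃ r ∈ Set.Ioc u v, P.eval r = 0 := by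
  have h := intermediate_value_Ioc (le_of_lt huv) (P.continuousOn (s := Set.Icc u v))
  obtain ⟨r, hr, hr0⟩ := h (Set.mem_Ioc.2 ⟨hu, hv⟩)
  exact ⟨r, hr, hr0⟩

lemma ivt_co (P : Polynomial ℝ) {u v : ℝ} (huv : u < v) (hu : P.eval u ≤ 0)
    (hv : 0 < P.eval v) : ∃ r ∈ Set.Ico u v, P.eval r = 0 := by
  have h := intermediate_value_Ico (le_of_lt huv) (P.continuousOn (s := Set.Icc u v))
  obtain ⟨r, hr, hr0⟩ := h (Set.mem_Ico.2 ⟨hu, hv⟩)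
  exact ⟨r, hr, hr0⟩

-- monotonicity helpers
lemma eval_le_eval_of_deriv_nonneg (P q : Polynomial ℝ) (hP : derivative P = q) {u v : ℝ}
    (huv : u ≤ v) (hq : ∀ x ∈ Set.Ioo u v, 0 ≤ q.eval x) : P.eval u ≤ P.eval v := by
  have hmono : MonotoneOn (fun x => P.eval x) (Set.Icc u v) := by
    apply monotoneOn_of_deriv_nonneg (convex_Icc u v) (P.continuous.continuousOn)
    · intro x hx
      exact (P.differentiable.differentiableAt).differentiableWithinAt
    · intro x hx
      rw [interior_Icc] at hx
      rw [Polynomial.deriv, hP]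
      exact hq x hx
  exact hmono (Set.left_mem_Icc.2 huv) (Set.right_mem_Icc.2 huv) huv

lemma eval_le_eval_of_deriv_nonpos (P q : Polynomial ℝ) (hP : derivative P = q) {u v : ℝ}
    (huv : u ≤ v) (hq : ∀ x ∈ Set.Ioo u v, q.eval x ≤ 0) : P.eval v ≤ P.eval u := by
  have hmono : AntitoneOn (fun x => P.eval x) (Set.Icc u v) := by
    apply antitoneOn_of_deriv_nonpos (convex_Icc u v) (P.continuous.continuousOn)
    · intro x hx
      exact (P.differentiable.differentiableAt).differentiableWithinAt
    · intro x hx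
      rw [interior_Icc] at hx
      rw [Polynomial.deriv, hP]
      exact hq x hx
  exact hmono (Set.left_mem_Icc.2 huv) (Set.right_mem_Icc.2 huv) huv

-- sign lemmas for products
lemma prodsign_gt (x : ℝ) : ∀ (m : Multiset ℝ), (∀ r ∈ m, r < x) →
    0 < ((m.map fun r => X - C r).prod).eval x ∧
    0 ≤ (derivative ((m.map fun r => X - C r).prod)).eval x ∧
    (m ≠ 0 → 0 < (derivative ((m.map fun r => X - C r).prod)).eval x) := by
  intro m
  induction m using Multiset.induction with
  | empty => intro _; simp
  | cons a m ih =>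
    intro h
    have ha : a < x := h a (Multiset.mem_cons_self a m)
    have hm := ih (fun r hr => h r (Multiset.mem_cons_of_mem hr))
    obtain ⟨h1, h2, h3⟩ := hm
    rw [Multiset.map_cons, Multiset.prod_cons]
    rw [derivative_mul]
    simp only [eval_mul, eval_add, eval_sub, eval_X, eval_C, derivative_sub, derivative_X,
      derivative_C, sub_zero, eval_one]
    constructor
    · exact mul_pos (by linarith) h1
    constructor
    · nlinarith
    · intro _; nlinarith

lemma prodsign_lt (x : ℝ) : ∀ (m : Multiset ℝ), (∀ r ∈ m, x < r) →
    0 < (-1:ℝ)^(Multiset.card m) * ((m.map fun r => X - C r).prod).eval x ∧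
    (m ≠ 0 → 0 < (-1:ℝ)^(Multiset.card m + 1) * (derivative ((m.map fun r => X - C r).prod)).eval x) := by
  intro m
  induction m using Multiset.induction with
  | empty => intro _; simp
  | cons a m ih =>
    intro h
    have ha : x < a := h a (Multiset.mem_cons_self a m)
    obtain ⟨h1, h3⟩ := ih (fun r hr => h r (Multiset.mem_cons_of_mem hr))
    rw [Multiset.map_cons, Multiset.prod_cons]
    rw [derivative_mul]
    simp only [eval_mul, eval_add, eval_sub, eval_X, eval_C, derivative_sub, derivative_X,
      derivative_C, sub_zero, eval_one, Multiset.card_cons, one_mul]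
    have hpow : ((-1:ℝ))^(Multiset.card m + 1) = -((-1:ℝ))^(Multiset.card m) := by ring
    constructor
    · rw [hpow]; nlinarith
    · intro _
      rw [show Multiset.card m + 1 + 1 = Multiset.card m + 2 from rfl]
      have : ((-1:ℝ))^(Multiset.card m + 2) = ((-1:ℝ))^(Multiset.card m) := by ring
      rw [this]
      by_cases hm0 : m = 0
      · subst hm0; simp; try nlinarith [h1]
      · have h3' := h3 hm0
        rw [hpow] at h3'
        nlinarith

lemma mult_succ (P q : Polynomial ℝ) (hP : derivative P = q) (hq : q ≠ 0) {w : ℝ}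
    (hw : P.eval w = 0) (k : ℕ) (hdvd : (X - C w)^k ∣ q) : k + 1 ≤ P.rootMultiplicity w := by
  have hP0 : P ≠ 0 := by rintro rfl; simp at hP; exact hq hP.symm
  have h1 : 1 ≤ P.rootMultiplicity w := (P.rootMultiplicity_pos hP0).2 hw
  have h2 : k ≤ q.rootMultiplicity w := (le_rootMultiplicity_iff hq).2 hdvd
  have h3 : (derivative P).rootMultiplicity w = P.rootMultiplicity w - 1 :=
    derivative_rootMultiplicity_of_root hw
  rw [hP] at h3
  omega

lemma count_le_roots (P : Polynomial ℝ) (hP0 : P ≠ 0) (m : Multiset ℝ)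
    (h : ∀ a, m.count a ≤ P.rootMultiplicity a) : m ≤ P.roots := by
  rw [Multiset.le_iff_count]
  intro a
  rw [count_roots]
  exact h a

lemma ms_add_le (m1 m2 t : Multiset ℝ) (h1 : m1 ≤ t) (h2 : m2 ≤ t)
    (hdisj : ∀ a ∈ m1, a ∉ m2) : m1 + m2 ≤ t := by
  rw [Multiset.le_iff_count]
  intro a
  rw [Multiset.count_add]
  by_cases ha : a ∈ m1
  · have : m2.count a = 0 := Multiset.count_eq_zero_of_notMem (hdisj a ha)
    rw [this, add_zero]
    exact Multiset.le_iff_count.1 h1 a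
  · have : m1.count a = 0 := Multiset.count_eq_zero_of_notMem ha
    rw [this, zero_add]
    exact Multiset.le_iff_count.1 h2 a

lemma ivt_oo' (P : Polynomial ℝ) {u v : ℝ} (huv : u < v) (hu : 0 < P.eval u)
    (hv : P.eval v < 0) : ∃ r ∈ Set.Ioo u v, P.eval r = 0 := by
  obtain ⟨r, hr, hr0⟩ := ivt_oo (-P) huv (by simpa) (by simpa)
  exact ⟨r, hr, by simpa using hr0⟩

lemma replicate_le_roots (P : Polynomial ℝ) (k : ℕ) (w : ℝ)
    (h : k ≤ P.rootMultiplicity w) : Multiset.replicate k w ≤ P.roots := by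
  rcases Nat.eq_zero_or_pos k with hk | hk
  · subst hk; simp
  have hP0 : P ≠ 0 := by rintro rfl; simp [rootMultiplicity_zero] at h; omega
  apply count_le_roots _ hP0
  intro a
  rw [Multiset.count_replicate]
  split
  · next heq => subst heq; exact h
  · omega

lemma single_le_roots (P : Polynomial ℝ) (hP0 : P ≠ 0) (r : ℝ) (h : P.eval r = 0) :
    ({r} : Multiset ℝ) ≤ P.roots := by
  have : 1 ≤ P.rootMultiplicity r := (P.rootMultiplicity_pos hP0).2 h
  simpa using replicate_le_roots P 1 r this

section Regions

variable {P q : Polynomial ℝ}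

lemma P_ne_zero (hP : derivative P = q) (hq0 : q ≠ 0) : P ≠ 0 := by
  rintro rfl; simp at hP; exact hq0 hP.symm

lemma region_L2 (hP : derivative P = q) (hq0 : q ≠ 0) {a w4 w3 : ℝ} (ha : a < w4) (h43 : w4 ≤ w3)
    (hPa : P.eval a < 0) (hP4 : 0 ≤ P.eval w4) (hP3 : P.eval w3 ≤ 0)
    (hd4 : (X - C w4) ∣ q) (hd3 : (X - C w3) ∣ q) :
    ∃ m : Multiset ℝ, m ≤ P.roots ∧ 2 ≤ Multiset.card m ∧ ∀ x ∈ m, x ≤ w3 := by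
  have hP0 : P ≠ 0 := P_ne_zero hP hq0
  by_cases hz4 : P.eval w4 = 0
  · refine ⟨Multiset.replicate 2 w4, ?_, by simp, ?_⟩
    · exact replicate_le_roots P 2 w4 (mult_succ P q hP hq0 hz4 1 (by simpa using hd4))
    · intro x hx; rw [Multiset.eq_of_mem_replicate hx]; exact h43
  · have hP4' : 0 < P.eval w4 := lt_of_le_of_ne hP4 (Ne.symm hz4)
    have h43' : w4 < w3 := by
      rcases eq_or_lt_of_le h43 with rfl | h; · linarith
      · exact h
    by_cases hz3 : P.eval w3 = 0
    · refine ⟨Multiset.replicate 2 w3, ?_, by simp, ?_⟩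
      · exact replicate_le_roots P 2 w3 (mult_succ P q hP hq0 hz3 1 (by simpa using hd3))
      · intro x hx; rw [Multiset.eq_of_mem_replicate hx]
    · have hP3' : P.eval w3 < 0 := lt_of_le_of_ne hP3 hz3
      obtain ⟨r1, hr1, hr1z⟩ := ivt_oo P ha hPa hP4'
      obtain ⟨r2, hr2, hr2z⟩ := ivt_oo' P h43' hP4' hP3'
      refine ⟨{r1} + {r2}, ?_, by simp, ?_⟩
      · refine ms_add_le _ _ _ (single_le_roots P hP0 r1 hr1z) (single_le_roots P hP0 r2 hr2z) ?_
        intro x hx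
        simp only [Multiset.mem_singleton] at hx ⊢
        subst hx
        intro hx2; subst hx2
        exact absurd hr1.2 (not_lt.2 (le_of_lt hr2.1))
      · intro x hx
        rcases Multiset.mem_add.1 hx with h | h <;> simp only [Multiset.mem_singleton] at h <;> subst h
        · linarith [hr1.2]
        · linarith [hr2.2]

lemma region_L3 (hP : derivative P = q) (hq0 : q ≠ 0) {a w4 w3 : ℝ} (ha : a < w4) (h43 : w4 ≤ w3)
    (hPa : P.eval a < 0) (hP4 : 0 ≤ P.eval w4) (hz3 : P.eval w3 = 0)
    (hd3 : (X - C w3) ∣ q) (hd43 : w4 = w3 → (X - C w3) ^ 2 ∣ q) :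
    ∃ m : Multiset ℝ, m ≤ P.roots ∧ 3 ≤ Multiset.card m ∧ ∀ x ∈ m, x ≤ w3 := by
  have hP0 : P ≠ 0 := P_ne_zero hP hq0
  rcases eq_or_lt_of_le h43 with heq | hlt
  · refine ⟨Multiset.replicate 3 w3, ?_, by simp, ?_⟩
    · exact replicate_le_roots P 3 w3 (mult_succ P q hP hq0 hz3 2 (hd43 heq))
    · intro x hx; rw [Multiset.eq_of_mem_replicate hx]
  · obtain ⟨rL, hrL, hrLz⟩ := ivt_oc P ha hPa hP4
    refine ⟨Multiset.replicate 2 w3 + {rL}, ?_, by simp, ?_⟩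
    · refine ms_add_le _ _ _
        (replicate_le_roots P 2 w3 (mult_succ P q hP hq0 hz3 1 (by simpa using hd3)))
        (single_le_roots P hP0 rL hrLz) ?_
      intro x hx
      rw [Multiset.eq_of_mem_replicate hx]
      simp only [Multiset.mem_singleton]
      intro hh; subst hh
      exact absurd hrL.2 (not_le.2 hlt)
    · intro x hx
      rcases Multiset.mem_add.1 hx with h | h
      · rw [Multiset.eq_of_mem_replicate h]
      · simp only [Multiset.mem_singleton] at h; subst h; linarith [hrL.2]

lemma region_R2 (hP : derivative P = q) (hq0 : q ≠ 0) {w2 w1 b : ℝ} (h21 : w2 ≤ w1) (hb : w1 < b)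
    (hP2 : 0 ≤ P.eval w2) (hP1 : P.eval w1 ≤ 0) (hPb : 0 < P.eval b)
    (hd2 : (X - C w2) ∣ q) (hd1 : (X - C w1) ∣ q) :
    ∃ m : Multiset ℝ, m ≤ P.roots ∧ 2 ≤ Multiset.card m ∧ ∀ x ∈ m, w2 ≤ x := by
  have hP0 : P ≠ 0 := P_ne_zero hP hq0
  by_cases hz1 : P.eval w1 = 0
  · refine ⟨Multiset.replicate 2 w1, ?_, by simp, ?_⟩
    · exact replicate_le_roots P 2 w1 (mult_succ P q hP hq0 hz1 1 (by simpa using hd1))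
    · intro x hx; rw [Multiset.eq_of_mem_replicate hx]; exact h21
  · have hP1' : P.eval w1 < 0 := lt_of_le_of_ne hP1 hz1
    have h21' : w2 < w1 := by
      rcases eq_or_lt_of_le h21 with rfl | h; · linarith
      · exact h
    by_cases hz2 : P.eval w2 = 0
    · refine ⟨Multiset.replicate 2 w2, ?_, by simp, ?_⟩
      · exact replicate_le_roots P 2 w2 (mult_succ P q hP hq0 hz2 1 (by simpa using hd2))
      · intro x hx; rw [Multiset.eq_of_mem_replicate hx]
    · have hP2' : 0 < P.eval w2 := lt_of_le_of_ne hP2 (Ne.symm hz2)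
      obtain ⟨r1, hr1, hr1z⟩ := ivt_oo' P h21' hP2' hP1'
      obtain ⟨r2, hr2, hr2z⟩ := ivt_oo P hb hP1' hPb
      refine ⟨{r1} + {r2}, ?_, by simp, ?_⟩
      · refine ms_add_le _ _ _ (single_le_roots P hP0 r1 hr1z) (single_le_roots P hP0 r2 hr2z) ?_
        intro x hx
        simp only [Multiset.mem_singleton] at hx ⊢
        subst hx
        intro hx2; subst hx2
        exact absurd hr1.2 (not_lt.2 (le_of_lt hr2.1))
      · intro x hx
        rcases Multiset.mem_add.1 hx with h | h <;> simp only [Multiset.mem_singleton] at h <;> subst h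
        · linarith [hr1.1]
        · linarith [hr2.1]

lemma region_R3 (hP : derivative P = q) (hq0 : q ≠ 0) {w2 w1 b : ℝ} (h21 : w2 ≤ w1) (hb : w1 < b)
    (hz2 : P.eval w2 = 0) (hP1 : P.eval w1 ≤ 0) (hPb : 0 < P.eval b)
    (hd2 : (X - C w2) ∣ q) (hd21 : w2 = w1 → (X - C w2) ^ 2 ∣ q) :
    ∃ m : Multiset ℝ, m ≤ P.roots ∧ 3 ≤ Multiset.card m ∧ ∀ x ∈ m, w2 ≤ x := by
  have hP0 : P ≠ 0 := P_ne_zero hP hq0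
  rcases eq_or_lt_of_le h21 with heq | hlt
  · refine ⟨Multiset.replicate 3 w2, ?_, by simp, ?_⟩
    · exact replicate_le_roots P 3 w2 (mult_succ P q hP hq0 hz2 2 (hd21 heq))
    · intro x hx; rw [Multiset.eq_of_mem_replicate hx]
  · obtain ⟨rR, hrR, hrRz⟩ := ivt_co P hb hP1 hPb
    refine ⟨Multiset.replicate 2 w2 + {rR}, ?_, by simp, ?_⟩
    · refine ms_add_le _ _ _
        (replicate_le_roots P 2 w2 (mult_succ P q hP hq0 hz2 1 (by simpa using hd2)))
        (single_le_roots P hP0 rR hrRz) ?_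
      intro x hx
      rw [Multiset.eq_of_mem_replicate hx]
      simp only [Multiset.mem_singleton]
      intro hh; subst hh
      exact absurd hrR.1 (not_le.2 hlt)
    · intro x hx
      rcases Multiset.mem_add.1 hx with h | h
      · rw [Multiset.eq_of_mem_replicate h]
      · simp only [Multiset.mem_singleton] at h; subst h; linarith [hrR.1]

end Regions

lemma count5 (w₁ w₂ w₃ w₄ : ℝ) (h12 : w₂ ≤ w₁) (h23 : w₃ ≤ w₂) (h34 : w₄ ≤ w₃)
    (h14 : w₄ < w₁) (P q : Polynomial ℝ) (hP : derivative P = q)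
    (hq : q = (X - C w₁) * (X - C w₂) * (X - C w₃) * (X - C w₄))
    (a b : ℝ) (ha : a < w₄) (hb : w₁ < b) (hPa : P.eval a < 0) (hPb : 0 < P.eval b)
    (hv4 : 0 ≤ P.eval w₄) (hv3 : P.eval w₃ ≤ 0) (hv2 : 0 ≤ P.eval w₂) (hv1 : P.eval w₁ ≤ 0) :
    5 ≤ Multiset.card P.roots := by
  have hq0 : q ≠ 0 := by
    rw [hq]
    exact ((((monic_X_sub_C w₁).mul (monic_X_sub_C w₂)).mul (monic_X_sub_C w₃)).mul
      (monic_X_sub_C w₄)).ne_zero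
  have hP0 : P ≠ 0 := P_ne_zero hP hq0
  have hd1 : (X - C w₁) ∣ q := ⟨(X - C w₂) * (X - C w₃) * (X - C w₄), by rw [hq]; ring⟩
  have hd2 : (X - C w₂) ∣ q := ⟨(X - C w₁) * (X - C w₃) * (X - C w₄), by rw [hq]; ring⟩
  have hd3 : (X - C w₃) ∣ q := ⟨(X - C w₁) * (X - C w₂) * (X - C w₄), by rw [hq]; ring⟩
  have hd4 : (X - C w₄) ∣ q := ⟨(X - C w₁) * (X - C w₂) * (X - C w₃), by rw [hq]; ring⟩
  rcases eq_or_lt_of_le h23 with heq | hlt32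
  · -- w₃ = w₂
    have hz3 : P.eval w₃ = 0 := le_antisymm hv3 (by rw [heq]; exact hv2)
    rcases eq_or_lt_of_le h34 with h43eq | h43lt
    · rcases eq_or_lt_of_le h12 with h21eq | h21lt
      · exfalso; rw [h43eq, heq, h21eq] at h14; exact lt_irrefl _ h14
      · -- w₄ = w₃ = w₂ < w₁
        have hcube : (X - C w₃) ^ 3 ∣ q := ⟨X - C w₁, by rw [hq, h43eq, heq]; ring⟩
        have hmult : 4 ≤ P.rootMultiplicity w₃ := mult_succ P q hP hq0 hz3 3 hcube
        obtain ⟨rR, hrR, hrRz⟩ := ivt_co P hb hv1 hPb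
        have hle : Multiset.replicate 4 w₃ + {rR} ≤ P.roots := by
          refine ms_add_le _ _ _ (replicate_le_roots P 4 w₃ hmult)
            (single_le_roots P hP0 rR hrRz) ?_
          intro x hx
          rw [Multiset.eq_of_mem_replicate hx]
          simp only [Multiset.mem_singleton]
          intro hh
          have : w₁ ≤ w₃ := by rw [hh]; exact hrR.1
          linarith [heq ▸ this]
        calc (5:ℕ) = Multiset.card (Multiset.replicate 4 w₃ + {rR}) := by simp
          _ ≤ _ := Multiset.card_le_card hle
    · rcases eq_or_lt_of_le h12 with h21eq | h21lt
      · -- w₄ < w₃ = w₂ = w₁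
        have hcube : (X - C w₃) ^ 3 ∣ q := ⟨X - C w₄, by rw [hq, heq, h21eq]; ring⟩
        have hmult : 4 ≤ P.rootMultiplicity w₃ := mult_succ P q hP hq0 hz3 3 hcube
        obtain ⟨rL, hrL, hrLz⟩ := ivt_oc P ha hPa hv4
        have hle : Multiset.replicate 4 w₃ + {rL} ≤ P.roots := by
          refine ms_add_le _ _ _ (replicate_le_roots P 4 w₃ hmult)
            (single_le_roots P hP0 rL hrLz) ?_
          intro x hx
          rw [Multiset.eq_of_mem_replicate hx]
          simp only [Multiset.mem_singleton]
          intro hh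
          have : w₃ ≤ w₄ := by rw [hh]; exact hrL.2
          linarith
        calc (5:ℕ) = Multiset.card (Multiset.replicate 4 w₃ + {rL}) := by simp
          _ ≤ _ := Multiset.card_le_card hle
      · -- w₄ < w₃ = w₂ < w₁
        have hsq : (X - C w₃) ^ 2 ∣ q := ⟨(X - C w₁) * (X - C w₄), by rw [hq, heq]; ring⟩
        have hmult : 3 ≤ P.rootMultiplicity w₃ := mult_succ P q hP hq0 hz3 2 hsq
        obtain ⟨rL, hrL, hrLz⟩ := ivt_oc P ha hPa hv4
        obtain ⟨rR, hrR, hrRz⟩ := ivt_co P hb hv1 hPb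
        have hrLlt : rL < w₃ := lt_of_le_of_lt hrL.2 h43lt
        have hrRgt : w₃ < rR := by have := hrR.1; rw [heq]; linarith
        have hle : Multiset.replicate 3 w₃ + ({rL} + {rR}) ≤ P.roots := by
          refine ms_add_le _ _ _ (replicate_le_roots P 3 w₃ hmult) ?_ ?_
          · refine ms_add_le _ _ _ (single_le_roots P hP0 rL hrLz)
              (single_le_roots P hP0 rR hrRz) ?_
            intro x hx
            simp only [Multiset.mem_singleton] at hx ⊢
            subst hx
            intro hh; subst hh; linarith
          · intro x hx
            rw [Multiset.eq_of_mem_replicate hx]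
            intro hh
            rcases Multiset.mem_add.1 hh with h | h <;>
              simp only [Multiset.mem_singleton] at h
            · subst h; linarith
            · subst h; linarith
        calc (5:ℕ) = Multiset.card (Multiset.replicate 3 w₃ + ({rL} + {rR})) := by simp
          _ ≤ _ := Multiset.card_le_card hle
  · -- w₃ < w₂
    by_cases hz3 : P.eval w₃ = 0
    · obtain ⟨mL, hmL, hcL, hbL⟩ := region_L3 hP hq0 ha h34 hPa hv4 hz3 hd3
        (fun hh => ⟨(X - C w₁) * (X - C w₂), by rw [hq, ← hh]; ring⟩)
      obtain ⟨mR, hmR, hcR, hbR⟩ := region_R2 hP hq0 h12 hb hv2 hv1 hPb hd2 hd1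
      have hle : mL + mR ≤ P.roots := by
        refine ms_add_le _ _ _ hmL hmR ?_
        intro x hx hx2
        have := hbL x hx
        have := hbR x hx2
        linarith
      calc (5:ℕ) ≤ Multiset.card mL + Multiset.card mR := by omega
        _ = Multiset.card (mL + mR) := (Multiset.card_add _ _).symm
        _ ≤ _ := Multiset.card_le_card hle
    · by_cases hz2 : P.eval w₂ = 0
      · obtain ⟨mL, hmL, hcL, hbL⟩ := region_L2 hP hq0 ha h34 hPa hv4 hv3 hd4 hd3
        obtain ⟨mR, hmR, hcR, hbR⟩ := region_R3 hP hq0 h12 hb hz2 hv1 hPb hd2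
          (fun hh => ⟨(X - C w₃) * (X - C w₄), by rw [hq, ← hh]; ring⟩)
        have hle : mL + mR ≤ P.roots := by
          refine ms_add_le _ _ _ hmL hmR ?_
          intro x hx hx2
          have := hbL x hx
          have := hbR x hx2
          linarith
        calc (5:ℕ) ≤ Multiset.card mL + Multiset.card mR := by omega
          _ = Multiset.card (mL + mR) := (Multiset.card_add _ _).symm
          _ ≤ _ := Multiset.card_le_card hle
      · have hv3' : P.eval w₃ < 0 := lt_of_le_of_ne hv3 hz3
        have hv2' : 0 < P.eval w₂ := lt_of_le_of_ne hv2 (Ne.symm hz2)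
        obtain ⟨rM, hrM, hrMz⟩ := ivt_oo P hlt32 hv3' hv2'
        obtain ⟨mL, hmL, hcL, hbL⟩ := region_L2 hP hq0 ha h34 hPa hv4 hv3 hd4 hd3
        obtain ⟨mR, hmR, hcR, hbR⟩ := region_R2 hP hq0 h12 hb hv2 hv1 hPb hd2 hd1
        have hle : (mL + {rM}) + mR ≤ P.roots := by
          refine ms_add_le _ _ _ ?_ hmR ?_
          · refine ms_add_le _ _ _ hmL (single_le_roots P hP0 rM hrMz) ?_
            intro x hx
            simp only [Multiset.mem_singleton]
            intro hh
            have := hbL x hx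
            rw [hh] at this
            linarith [hrM.1]
          · intro x hx hx2
            have hxval : x < w₂ := by
              rcases Multiset.mem_add.1 hx with h | h
              · exact lt_of_le_of_lt (hbL x h) hlt32
              · simp only [Multiset.mem_singleton] at h; subst h; exact hrM.2
            have := hbR x hx2
            linarith
        calc (5:ℕ) ≤ Multiset.card mL + 1 + Multiset.card mR := by omega
          _ = Multiset.card ((mL + {rM}) + mR) := by simp [Multiset.card_add]
          _ ≤ _ := Multiset.card_le_card hle

noncomputable def Faux (w₁ w₂ w₃ w₄ : ℝ) : Polynomial ℝ :=
  C (1/5) * X^5 - C (1/4) * C (w₁+w₂+w₃+w₄) * X^4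
    + C (1/3) * C (w₁*w₂+w₁*w₃+w₁*w₄+w₂*w₃+w₂*w₄+w₃*w₄) * X^3
    - C (1/2) * C (w₁*w₂*w₃+w₁*w₂*w₄+w₁*w₃*w₄+w₂*w₃*w₄) * X^2
    + C (w₁*w₂*w₃*w₄) * X

lemma Faux_deriv (w₁ w₂ w₃ w₄ : ℝ) : derivative (Faux w₁ w₂ w₃ w₄) =
    (X - C w₁) * (X - C w₂) * (X - C w₃) * (X - C w₄) := by
  unfold Faux
  apply Polynomial.funext
  intro x
  simp only [derivative_add, derivative_sub, derivative_mul, derivative_X_pow, derivative_X,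
    derivative_C, eval_add, eval_sub, eval_mul, eval_pow, eval_C, eval_X, eval_natCast,
    eval_one, zero_mul, mul_one, mul_zero, add_zero, zero_add]
  push_cast
  ring

lemma Faux_id (w₁ w₂ w₃ w₄ : ℝ) :
    (Faux w₁ w₂ w₃ w₄).eval w₁ - (Faux w₁ w₂ w₃ w₄).eval w₄ =
      -((w₁-w₄)^3 * ((w₁-w₄)^2 + 5*((2*w₂-w₁-w₄)*(2*w₃-w₁-w₄))))/120 := by
  unfold Faux
  simp only [eval_add, eval_sub, eval_mul, eval_pow, eval_C, eval_X]
  ring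

lemma natDegree_P_eq (P q : Polynomial ℝ) (hP : derivative P = q) (hq0 : q ≠ 0)
    (hqdeg : q.natDegree = 4) : P.natDegree = 5 := by
  have hn0 : P.natDegree ≠ 0 := by
    intro h
    rw [Polynomial.eq_C_of_natDegree_eq_zero h] at hP
    simp at hP
    exact hq0 hP.symm
  have hd := degree_derivative_eq P (Nat.pos_of_ne_zero hn0)
  rw [hP, degree_eq_natDegree hq0, hqdeg] at hd
  have : (4 : ℕ) = P.natDegree - 1 := by exact_mod_cast hd
  omega

lemma q_natDegree (w₁ w₂ w₃ w₄ : ℝ) :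
    ((X - C w₁) * (X - C w₂) * (X - C w₃) * (X - C w₄) : Polynomial ℝ).natDegree = 4 := by
  rw [(((monic_X_sub_C w₁).mul (monic_X_sub_C w₂)).mul (monic_X_sub_C w₃)).natDegree_mul
    (monic_X_sub_C w₄),
    ((monic_X_sub_C w₁).mul (monic_X_sub_C w₂)).natDegree_mul (monic_X_sub_C w₃),
    (monic_X_sub_C w₁).natDegree_mul (monic_X_sub_C w₂)]
  simp [natDegree_X_sub_C]

lemma lc_P (P q : Polynomial ℝ) (hP : derivative P = q) (hq0 : q ≠ 0)
    (hqmonic : q.Monic) (hqdeg : q.natDegree = 4) : P.leadingCoeff = 1/5 := by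
  have hPdeg := natDegree_P_eq P q hP hq0 hqdeg
  have h1 : q.coeff 4 = 1 := by
    have := hqmonic.coeff_natDegree
    rwa [hqdeg] at this
  have h2 : (derivative P).coeff 4 = P.coeff 5 * 5 := by
    rw [coeff_derivative]
    norm_num
  rw [hP, h1] at h2
  rw [leadingCoeff, hPdeg]
  linarith

lemma hyperbolic_of_card (P : Polynomial ℝ) (hP0 : P ≠ 0)
    (hcard : Multiset.card P.roots = P.natDegree) : Hyperbolic P := by
  have hsplits : P.Splits := splits_iff_card_roots.2 hcard
  intro z hz
  rw [hsplits.roots_map (algebraMap ℝ ℂ)] at hz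
  obtain ⟨r, _, rfl⟩ := Multiset.mem_map.1 hz
  simp [Complex.ofReal_im]

lemma q_monic (w₁ w₂ w₃ w₄ : ℝ) :
    ((X - C w₁) * (X - C w₂) * (X - C w₃) * (X - C w₄) : Polynomial ℝ).Monic :=
  (((monic_X_sub_C w₁).mul (monic_X_sub_C w₂)).mul (monic_X_sub_C w₃)).mul (monic_X_sub_C w₄)

lemma exists_outer (P q : Polynomial ℝ) (hP : derivative P = q) (hq0 : q ≠ 0)
    (hqmonic : q.Monic) (hqdeg : q.natDegree = 4) (w₁ w₄ : ℝ) :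
    ∃ a b : ℝ, a < w₄ ∧ w₁ < b ∧ P.eval a < 0 ∧ 0 < P.eval b := by
  have hPdeg := natDegree_P_eq P q hP hq0 hqdeg
  have hlc := lc_P P q hP hq0 hqmonic hqdeg
  have hdegpos : 0 < P.degree := natDegree_pos_iff_degree_pos.1 (by omega)
  have htop := P.tendsto_atTop_of_leadingCoeff_nonneg hdegpos (by rw [hlc]; norm_num)
  obtain ⟨b, hb1, hb2⟩ := ((htop.eventually_ge_atTop 1).and
    (Filter.eventually_ge_atTop (w₁ + 1))).exists
  have hXdeg : (-X : Polynomial ℝ).natDegree ≠ 0 := by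
    rw [natDegree_neg, natDegree_X]; omega
  have hcompdeg : 0 < (P.comp (-X)).degree := by
    apply natDegree_pos_iff_degree_pos.1
    rw [natDegree_comp, natDegree_neg, natDegree_X, hPdeg, mul_one]
    omega
  have hXlc : (-X : Polynomial ℝ).leadingCoeff = -1 := by
    rw [show (-X : Polynomial ℝ) = -(X) from rfl]
    simp [leadingCoeff]
  have hcomplc : (P.comp (-X)).leadingCoeff = -(1/5) := by
    rw [leadingCoeff_comp hXdeg, hlc, hPdeg, hXlc]
    norm_num
  have hbot := (P.comp (-X)).tendsto_atBot_of_leadingCoeff_nonpos hcompdeg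
    (by rw [hcomplc]; norm_num)
  obtain ⟨x, hx1, hx2⟩ := ((hbot.eventually_le_atBot (-1)).and
    (Filter.eventually_ge_atTop (-w₄ + 1))).exists
  have hx1' : P.eval (-x) ≤ -1 := by
    rw [show P.eval (-x) = (P.comp (-X)).eval x by rw [eval_comp]; simp]
    exact hx1
  exact ⟨-x, b, by linarith, by linarith, by linarith, by linarith⟩

lemma sign_q_43 (w₁ w₂ w₃ w₄ : ℝ) (h12 : w₂ ≤ w₁) (h23 : w₃ ≤ w₂)
    {x : ℝ} (hx : x ∈ Set.Ioo w₄ w₃) :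
    ((X - C w₁) * (X - C w₂) * (X - C w₃) * (X - C w₄) : Polynomial ℝ).eval x ≤ 0 := by
  obtain ⟨hx1, hx2⟩ := hx
  simp only [eval_mul, eval_sub, eval_X, eval_C]
  have h1 : 0 < w₁ - x := by linarith
  have h2 : 0 < w₂ - x := by linarith
  have h3 : 0 < w₃ - x := by linarith
  have h4 : 0 < x - w₄ := by linarith
  nlinarith [mul_pos (mul_pos (mul_pos h1 h2) h3) h4]

lemma sign_q_32 (w₁ w₂ w₃ w₄ : ℝ) (h12 : w₂ ≤ w₁) (h34 : w₄ ≤ w₃)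
    {x : ℝ} (hx : x ∈ Set.Ioo w₃ w₂) :
    0 ≤ ((X - C w₁) * (X - C w₂) * (X - C w₃) * (X - C w₄) : Polynomial ℝ).eval x := by
  obtain ⟨hx1, hx2⟩ := hx
  simp only [eval_mul, eval_sub, eval_X, eval_C]
  have h1 : 0 < w₁ - x := by linarith
  have h2 : 0 < w₂ - x := by linarith
  have h3 : 0 < x - w₃ := by linarith
  have h4 : 0 < x - w₄ := by linarith
  nlinarith [mul_pos (mul_pos (mul_pos h1 h2) h3) h4]

lemma sign_q_21 (w₁ w₂ w₃ w₄ : ℝ) (h23 : w₃ ≤ w₂) (h34 : w₄ ≤ w₃)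
    {x : ℝ} (hx : x ∈ Set.Ioo w₂ w₁) :
    ((X - C w₁) * (X - C w₂) * (X - C w₃) * (X - C w₄) : Polynomial ℝ).eval x ≤ 0 := by
  obtain ⟨hx1, hx2⟩ := hx
  simp only [eval_mul, eval_sub, eval_X, eval_C]
  have h1 : 0 < w₁ - x := by linarith
  have h2 : 0 < x - w₂ := by linarith
  have h3 : 0 < x - w₃ := by linarith
  have h4 : 0 < x - w₄ := by linarith
  nlinarith [mul_pos (mul_pos (mul_pos h1 h2) h3) h4]

lemma sign_q_ge1 (w₁ w₂ w₃ w₄ : ℝ) (h12 : w₂ ≤ w₁) (h23 : w₃ ≤ w₂) (h34 : w₄ ≤ w₃)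
    {x : ℝ} (hx : w₁ < x) :
    0 ≤ ((X - C w₁) * (X - C w₂) * (X - C w₃) * (X - C w₄) : Polynomial ℝ).eval x := by
  simp only [eval_mul, eval_sub, eval_X, eval_C]
  have h1 : 0 < x - w₁ := by linarith
  have h2 : 0 < x - w₂ := by linarith
  have h3 : 0 < x - w₃ := by linarith
  have h4 : 0 < x - w₄ := by linarith
  nlinarith [mul_pos (mul_pos (mul_pos h1 h2) h3) h4]

lemma sign_q_le4 (w₁ w₂ w₃ w₄ : ℝ) (h12 : w₂ ≤ w₁) (h23 : w₃ ≤ w₂) (h34 : w₄ ≤ w₃)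
    {x : ℝ} (hx : x < w₄) :
    0 ≤ ((X - C w₁) * (X - C w₂) * (X - C w₃) * (X - C w₄) : Polynomial ℝ).eval x := by
  simp only [eval_mul, eval_sub, eval_X, eval_C]
  have h1 : 0 < w₁ - x := by linarith
  have h2 : 0 < w₂ - x := by linarith
  have h3 : 0 < w₃ - x := by linarith
  have h4 : 0 < w₄ - x := by linarith
  nlinarith [mul_pos (mul_pos (mul_pos h1 h2) h3) h4]

lemma converse_main (w₁ w₂ w₃ w₄ : ℝ) (h12 : w₂ ≤ w₁) (h23 : w₃ ≤ w₂) (h34 : w₄ ≤ w₃)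
    (h14 : w₄ < w₁) (q : Polynomial ℝ)
    (hq : q = (X - C w₁) * (X - C w₂) * (X - C w₃) * (X - C w₄))
    (hcond : 0 ≤ (w₁ - w₄)^2 + 5 * ((2*w₂ - w₁ - w₄) * (2*w₃ - w₁ - w₄))) :
    ∃ P : Polynomial ℝ, derivative P = q ∧ Hyperbolic P := by
  have hqmonic : q.Monic := by rw [hq]; exact q_monic w₁ w₂ w₃ w₄
  have hq0 : q ≠ 0 := hqmonic.ne_zero
  have hqdeg : q.natDegree = 4 := by rw [hq]; exact q_natDegree w₁ w₂ w₃ w₄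
  set F := Faux w₁ w₂ w₃ w₄ with hFdef
  have hF : derivative F = q := by rw [hFdef, Faux_deriv, hq]
  set M := min (F.eval w₄) (F.eval w₂) with hM
  set P := F - C M with hPdef
  have hP : derivative P = q := by rw [hPdef, derivative_sub, derivative_C, sub_zero, hF]
  have hev : ∀ x, P.eval x = F.eval x - M := by intro x; rw [hPdef]; simp
  have h34' : F.eval w₃ ≤ F.eval w₄ := by
    apply eval_le_eval_of_deriv_nonpos F q hF h34
    intro x hx
    rw [hq]; exact sign_q_43 w₁ w₂ w₃ w₄ h12 h23 hx
  have h32' : F.eval w₃ ≤ F.eval w₂ := by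
    apply eval_le_eval_of_deriv_nonneg F q hF h23
    intro x hx
    rw [hq]; exact sign_q_32 w₁ w₂ w₃ w₄ h12 h34 hx
  have h12' : F.eval w₁ ≤ F.eval w₂ := by
    apply eval_le_eval_of_deriv_nonpos F q hF h12
    intro x hx
    rw [hq]; exact sign_q_21 w₁ w₂ w₃ w₄ h23 h34 hx
  have h14' : F.eval w₁ ≤ F.eval w₄ := by
    have hid := Faux_id w₁ w₂ w₃ w₄
    have hd3 : (0:ℝ) ≤ (w₁ - w₄)^3 := pow_nonneg (by linarith) 3
    nlinarith [mul_nonneg hd3 hcond]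
  have hv4 : 0 ≤ P.eval w₄ := by rw [hev]; have := min_le_left (F.eval w₄) (F.eval w₂); rw [← hM] at this; linarith
  have hv2 : 0 ≤ P.eval w₂ := by rw [hev]; have := min_le_right (F.eval w₄) (F.eval w₂); rw [← hM] at this; linarith
  have hv3 : P.eval w₃ ≤ 0 := by
    rw [hev]
    have : F.eval w₃ ≤ M := le_min h34' h32'
    linarith
  have hv1 : P.eval w₁ ≤ 0 := by
    rw [hev]
    have : F.eval w₁ ≤ M := le_min h14' h12'
    linarith
  obtain ⟨a, b, ha, hb, hPa, hPb⟩ := exists_outer P q hP hq0 hqmonic hqdeg w₁ w₄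
  have hcount := count5 w₁ w₂ w₃ w₄ h12 h23 h34 h14 P q hP hq a b ha hb hPa hPb hv4 hv3 hv2 hv1
  have hPdeg := natDegree_P_eq P q hP hq0 hqdeg
  have hcard : Multiset.card P.roots = P.natDegree := by
    have := P.card_roots'
    omega
  exact ⟨P, hP, hyperbolic_of_card P (P_ne_zero hP hq0) hcard⟩

lemma forward_main (w₁ w₂ w₃ w₄ : ℝ) (h12 : w₂ ≤ w₁) (h23 : w₃ ≤ w₂) (h34 : w₄ ≤ w₃)
    (h14 : w₄ < w₁) (q : Polynomial ℝ)
    (hq : q = (X - C w₁) * (X - C w₂) * (X - C w₃) * (X - C w₄))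
    (P : Polynomial ℝ) (hP : derivative P = q) (hyp : Hyperbolic P) :
    0 ≤ (w₁ - w₄)^2 + 5 * ((2*w₂ - w₁ - w₄) * (2*w₃ - w₁ - w₄)) := by
  have hqmonic : q.Monic := by rw [hq]; exact q_monic w₁ w₂ w₃ w₄
  have hq0 : q ≠ 0 := hqmonic.ne_zero
  have hqdeg : q.natDegree = 4 := by rw [hq]; exact q_natDegree w₁ w₂ w₃ w₄
  have hPdeg := natDegree_P_eq P q hP hq0 hqdeg
  have hlc := lc_P P q hP hq0 hqmonic hqdeg
  have hP0 : P ≠ 0 := P_ne_zero hP hq0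
  set f := algebraMap ℝ ℂ with hf
  have hsplits : Splits (P.map f) :=
    IsAlgClosed.splits _
  have hprod := hsplits.eq_prod_roots
  have hfr : ∀ r : ℝ, f r = (r : ℂ) := fun r => by rw [hf]; rfl
  have hlcm : (P.map f).leadingCoeff = ((1:ℂ)/5) := by
    rw [leadingCoeff_map f, hlc, hfr]
    push_cast
    norm_num
  have hmapdeg : (P.map f).natDegree = 5 := by rw [natDegree_map f, hPdeg]
  have hcardC : Multiset.card (P.map f).roots = 5 := by
    rw [splits_iff_card_roots.1 hsplits, hmapdeg]
  set m : Multiset ℝ := (P.map f).roots.map Complex.re with hm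
  have hcardm : Multiset.card m = 5 := by rw [hm, Multiset.card_map, hcardC]
  have hre : ∀ z ∈ (P.map f).roots, f z.re = z := by
    intro z hz
    have him := hyp z hz
    rw [hfr]
    apply Complex.ext
    · simp
    · simp [him]
  set G := (m.map fun r => X - C r).prod with hG
  have hkey : Polynomial.map f (C ((1:ℝ)/5) * G) = P.map f := by
    rw [hG, Polynomial.map_mul, Polynomial.map_C, Polynomial.map_multiset_prod,
      Multiset.map_map, hm, Multiset.map_map]
    have : Multiset.map ((Polynomial.map f ∘ fun r => X - C r) ∘ Complex.re)
        (P.map f).roots = Multiset.map (fun z => X - C z) (P.map f).roots := by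
      apply Multiset.map_congr rfl
      intro z hz
      simp only [Function.comp_apply, Polynomial.map_sub, Polynomial.map_X, Polynomial.map_C]
      rw [hre z hz]
    rw [this, hprod, hlcm, hfr]
    push_cast
    norm_num
  have hPeq : P = C ((1:ℝ)/5) * G :=
    (Polynomial.map_injective f f.injective hkey).symm
  have hm0 : m ≠ 0 := by
    intro h0; rw [h0] at hcardm; simp at hcardm
  have hdP : q = C ((1:ℝ)/5) * derivative G := by
    rw [← hP, hPeq, derivative_C_mul]
  have hq1 : q.eval w₁ = 0 := by rw [hq]; simp
  have hq4 : q.eval w₄ = 0 := by rw [hq]; simp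
  have hG1 : (derivative G).eval w₁ = 0 := by
    have := congrArg (eval w₁) hdP
    rw [hq1] at this
    simp only [eval_mul, eval_C] at this
    linarith
  have hG4 : (derivative G).eval w₄ = 0 := by
    have := congrArg (eval w₄) hdP
    rw [hq4] at this
    simp only [eval_mul, eval_C] at this
    linarith
  -- a root ≥ w₁
  have hex1 : ∃ r ∈ m, w₁ ≤ r := by
    by_contra hcon
    push_neg at hcon
    obtain ⟨-, -, h3⟩ := prodsign_gt w₁ m hcon
    have := h3 hm0
    rw [← hG] at this
    linarith [hG1 ▸ this]
  -- a root ≤ w₄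
  have hex4 : ∃ r ∈ m, r ≤ w₄ := by
    by_contra hcon
    push_neg at hcon
    obtain ⟨-, h3⟩ := prodsign_lt w₄ m hcon
    have := h3 hm0
    rw [← hG, hcardm] at this
    norm_num at this
    linarith [hG4 ▸ this]
  have evalG_zero : ∀ r ∈ m, P.eval r = 0 := by
    intro r hrm
    rw [hPeq]
    simp only [eval_mul, eval_C]
    have : G.eval r = 0 := by
      rw [hG, eval_multiset_prod, Multiset.map_map]
      apply Multiset.prod_eq_zero
      exact Multiset.mem_map.2 ⟨r, hrm, by simp⟩
    rw [this, mul_zero]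
  obtain ⟨r, hrm, hr⟩ := hex1
  obtain ⟨r', hrm', hr'⟩ := hex4
  have h1le : P.eval w₁ ≤ 0 := by
    have hmono := eval_le_eval_of_deriv_nonneg P q hP hr
      (fun x hx => by rw [hq]; exact sign_q_ge1 w₁ w₂ w₃ w₄ h12 h23 h34 hx.1)
    rw [evalG_zero r hrm] at hmono
    exact hmono
  have h4ge : 0 ≤ P.eval w₄ := by
    have hmono := eval_le_eval_of_deriv_nonneg P q hP hr'
      (fun x hx => by rw [hq]; exact sign_q_le4 w₁ w₂ w₃ w₄ h12 h23 h34 hx.2)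
    rw [evalG_zero r' hrm'] at hmono
    exact hmono
  -- translate to Faux
  have hFd : derivative (P - Faux w₁ w₂ w₃ w₄) = 0 := by
    rw [derivative_sub, hP, Faux_deriv, hq, sub_self]
  have hconst := eq_C_of_derivative_eq_zero hFd
  have hcc : P.eval w₁ - (Faux w₁ w₂ w₃ w₄).eval w₁ =
      P.eval w₄ - (Faux w₁ w₂ w₃ w₄).eval w₄ := by
    have e1 := congrArg (eval w₁) hconst
    have e2 := congrArg (eval w₄) hconst
    simp only [eval_sub, eval_C] at e1 e2
    linarith
  have hid := Faux_id w₁ w₂ w₃ w₄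
  have hd3 : 0 < (w₁ - w₄)^3 := pow_pos (by linarith) 3
  nlinarith [hid, hcc, h1le, h4ge]

theorem stmt_18 (w₁ w₂ w₃ w₄ : ℝ) (h12 : w₂ ≤ w₁) (h23 : w₃ ≤ w₂) (h34 : w₄ ≤ w₃)
    (h14 : w₄ < w₁)
    (s t : ℝ) (hs : s = (2 * w₂ - w₁ - w₄) / (w₁ - w₄))
    (ht : t = (2 * w₃ - w₁ - w₄) / (w₁ - w₄))
    (p : Polynomial ℝ)
    (hp : p = (X - C w₁) * (X - C w₂) * (X - C w₃) * (X - C w₄)) :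
    (∃ P : Polynomial ℝ, derivative P = p ∧ Hyperbolic P) ↔ s * t ≥ -(1 / 5) := by
  have hd : (0:ℝ) < w₁ - w₄ := by linarith
  have hd2 : (0:ℝ) < (w₁ - w₄)^2 := by positivity
  have hst : s * t = ((2*w₂ - w₁ - w₄) * (2*w₃ - w₁ - w₄)) / (w₁ - w₄)^2 := by
    rw [hs, ht, div_mul_div_comm, sq]
  constructor
  · rintro ⟨P, hP, hyp⟩
    have h := forward_main w₁ w₂ w₃ w₄ h12 h23 h34 h14 p hp P hP hyp
    rw [ge_iff_le, hst, le_div_iff₀ hd2]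
    linarith
  · intro h
    rw [ge_iff_le, hst, le_div_iff₀ hd2] at h
    exact converse_main w₁ w₂ w₃ w₄ h12 h23 h34 h14 p hp (by linarith)
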